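/- Among all extensions of a partition Γ* of {1,...,n}, the simple extension has the strictly smallest sum of unCD distances to the other extensions of Γ*, unless Γ* has exactly one block or the relevant block is a singleton with k=1; in general, the simple extension's sum n is less than or equal to the sum (k−1)|S_{l'}|+n of any complex extension. -/
import Mathlib


open Finset

/-- `i` and `j` lie in the same block of the partition `Γ`. -/
def samePart {n : ℕ} (Γ : Finpartition (univ : Finset (Fin n))) (i j : Fin n) : Prop :=
  ∃ S ∈ Γ.parts, i ∈ S ∧ j ∈ S

open scoped Classical in
/-- Unnormalized Cluster Difference between two partitions of `{1,…,n}`. -/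
noncomputable def unCD {n : ℕ} (Γ₁ Γ₂ : Finpartition (univ : Finset (Fin n))) : ℕ :=
  ((univ : Finset (Fin n × Fin n)).filter
    (fun p => p.1 < p.2 ∧ ¬ (samePart Γ₁ p.1 p.2 ↔ samePart Γ₂ p.1 p.2))).card

/-- `Γ` is the simple extension of `Γs`: blocks of `Γs` (reindexed) plus the singleton `{n+1}`. -/
def IsSimpleExt {n : ℕ} (Γs : Finpartition (univ : Finset (Fin n)))
    (Γ : Finpartition (univ : Finset (Fin (n + 1)))) : Prop :=
  Γ.parts = insert {Fin.last n} (Γs.parts.image (fun S => S.image Fin.castSucc))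

/-- `Γ` is the complex extension of `Γs` along its block `S`:
the element `n+1` is added to the block `S`. -/
def IsComplexExt {n : ℕ} (Γs : Finpartition (univ : Finset (Fin n))) (S : Finset (Fin n))
    (Γ : Finpartition (univ : Finset (Fin (n + 1)))) : Prop :=
  S ∈ Γs.parts ∧
    Γ.parts = insert (insert (Fin.last n) (S.image Fin.castSucc))
      ((Γs.parts.erase S).image (fun T => T.image Fin.castSucc))

/-- `Γ` is an extension of `Γs` (equivalently, `Γs` is the reduct of `Γ`). -/
def IsExt {n : ℕ} (Γs : Finpartition (univ : Finset (Fin n)))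
    (Γ : Finpartition (univ : Finset (Fin (n + 1)))) : Prop :=
  IsSimpleExt Γs Γ ∨ ∃ S, IsComplexExt Γs S Γ

noncomputable instance {n : ℕ} : Fintype (Finpartition (univ : Finset (Fin n))) :=
  Fintype.ofInjective Finpartition.parts (fun _ _ h => Finpartition.ext h)

noncomputable instance {n : ℕ} : DecidableEq (Finpartition (univ : Finset (Fin n))) :=
  Classical.decEq _

open scoped Classical

variable {n : ℕ} {Γs : Finpartition (univ : Finset (Fin n))}

lemma castSucc_ne_last (i : Fin n) : (Fin.castSucc i) ≠ Fin.last n :=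
  ne_of_lt (Fin.castSucc_lt_last i)

lemma mem_cast_image {U : Finset (Fin n)} {i : Fin n} :
    i.castSucc ∈ U.image Fin.castSucc ↔ i ∈ U := by
  simp [Finset.mem_image, Fin.castSucc_inj]

lemma unCD_eq_card {Γ₁ Γ₂ : Finpartition (univ : Finset (Fin (n + 1)))}
    (H : ∀ i j : Fin n, samePart Γ₁ i.castSucc j.castSucc ↔ samePart Γ₂ i.castSucc j.castSucc) :
    unCD Γ₁ Γ₂ = ((univ : Finset (Fin n)).filter
      (fun i => ¬ (samePart Γ₁ i.castSucc (Fin.last n) ↔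
        samePart Γ₂ i.castSucc (Fin.last n)))).card := by
  unfold unCD
  have hinj : Function.Injective (fun i : Fin n => (i.castSucc, Fin.last n)) := by
    intro a b h
    simpa using congrArg Prod.fst h
  rw [← Finset.card_image_of_injective _ hinj]
  congr 1
  ext p
  simp only [mem_image, mem_filter, mem_univ, true_and]
  constructor
  · rintro ⟨hlt, hne⟩
    rcases Fin.eq_castSucc_or_eq_last p.2 with ⟨j, hj⟩ | hj
    · exfalso
      rcases Fin.eq_castSucc_or_eq_last p.1 with ⟨i, hi⟩ | hi
      · rw [hi, hj] at hne; exact hne (H i j)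
      · rw [hi, hj] at hlt
        exact absurd hlt (not_lt.2 (le_of_lt (Fin.castSucc_lt_last j)))
    · rcases Fin.eq_castSucc_or_eq_last p.1 with ⟨i, hi⟩ | hi
      · refine ⟨i, ?_, ?_⟩
        · rw [hi, hj] at hne; exact hne
        · rw [Prod.ext_iff]; exact ⟨hi.symm, hj.symm⟩
      · exfalso; rw [hi, hj] at hlt; exact lt_irrefl _ hlt
  · rintro ⟨i, hi, rfl⟩
    exact ⟨Fin.castSucc_lt_last i, hi⟩

lemma simple_cast (h₀ : IsSimpleExt Γs Γ₀) (i j : Fin n) :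
    samePart Γ₀ i.castSucc j.castSucc ↔ samePart Γs i j := by
  rw [IsSimpleExt] at h₀
  constructor
  · rintro ⟨T, hT, hiT, hjT⟩
    rw [h₀, mem_insert] at hT
    rcases hT with rfl | hT
    · exact absurd (mem_singleton.1 hiT) (castSucc_ne_last i)
    · rcases mem_image.1 hT with ⟨U, hU, rfl⟩
      exact ⟨U, hU, mem_cast_image.1 hiT,
        mem_cast_image.1 hjT⟩
  · rintro ⟨U, hU, hiU, hjU⟩
    exact ⟨U.image Fin.castSucc, by rw [h₀]; exact mem_insert_of_mem (mem_image_of_mem _ hU),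
      mem_image_of_mem _ hiU, mem_image_of_mem _ hjU⟩

lemma simple_last (h₀ : IsSimpleExt Γs Γ₀) (i : Fin n) :
    ¬ samePart Γ₀ i.castSucc (Fin.last n) := by
  rw [IsSimpleExt] at h₀
  rintro ⟨T, hT, hiT, hlT⟩
  rw [h₀, mem_insert] at hT
  rcases hT with rfl | hT
  · exact castSucc_ne_last i (mem_singleton.1 hiT)
  · rcases mem_image.1 hT with ⟨U, hU, rfl⟩
    rcases mem_image.1 hlT with ⟨u, _, hu⟩
    exact castSucc_ne_last u hu

lemma complex_cast {S : Finset (Fin n)} {Γ : Finpartition (univ : Finset (Fin (n + 1)))}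
    (h : IsComplexExt Γs S Γ) (i j : Fin n) :
    samePart Γ i.castSucc j.castSucc ↔ samePart Γs i j := by
  obtain ⟨hS, hp⟩ := h
  constructor
  · rintro ⟨T, hT, hiT, hjT⟩
    rw [hp, mem_insert] at hT
    rcases hT with rfl | hT
    · rw [mem_insert] at hiT hjT
      refine ⟨S, hS, ?_, ?_⟩
      · rcases hiT with h' | h'
        · exact absurd h' (castSucc_ne_last i)
        · exact mem_cast_image.1 h'
      · rcases hjT with h' | h'
        · exact absurd h' (castSucc_ne_last j)
        · exact mem_cast_image.1 h'
    · rcases mem_image.1 hT with ⟨U, hU, rfl⟩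
      exact ⟨U, mem_of_mem_erase hU,
        mem_cast_image.1 hiT,
        mem_cast_image.1 hjT⟩
  · rintro ⟨U, hU, hiU, hjU⟩
    by_cases hUS : U = S
    · subst hUS
      exact ⟨insert (Fin.last n) (U.image Fin.castSucc), by rw [hp]; exact mem_insert_self _ _,
        mem_insert_of_mem (mem_image_of_mem _ hiU), mem_insert_of_mem (mem_image_of_mem _ hjU)⟩
    · exact ⟨U.image Fin.castSucc,
        by rw [hp]; exact mem_insert_of_mem (mem_image_of_mem _ (mem_erase.2 ⟨hUS, hU⟩)),
        mem_image_of_mem _ hiU, mem_image_of_mem _ hjU⟩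

lemma complex_last {S : Finset (Fin n)} {Γ : Finpartition (univ : Finset (Fin (n + 1)))}
    (h : IsComplexExt Γs S Γ) (i : Fin n) :
    samePart Γ i.castSucc (Fin.last n) ↔ i ∈ S := by
  obtain ⟨hS, hp⟩ := h
  constructor
  · rintro ⟨T, hT, hiT, hlT⟩
    rw [hp, mem_insert] at hT
    rcases hT with rfl | hT
    · rw [mem_insert] at hiT
      rcases hiT with h' | h'
      · exact absurd h' (castSucc_ne_last i)
      · exact mem_cast_image.1 h'
    · exfalso
      rcases mem_image.1 hT with ⟨U, hU, rfl⟩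
      rcases mem_image.1 hlT with ⟨u, _, hu⟩
      exact castSucc_ne_last u hu
  · intro hi
    exact ⟨insert (Fin.last n) (S.image Fin.castSucc), by rw [hp]; exact mem_insert_self _ _,
      mem_insert_of_mem (mem_image_of_mem _ hi), mem_insert_self _ _⟩

lemma unCD_simple_complex {Γ₀ Γ : Finpartition (univ : Finset (Fin (n + 1)))}
    {S : Finset (Fin n)} (h₀ : IsSimpleExt Γs Γ₀) (h : IsComplexExt Γs S Γ) :
    unCD Γ₀ Γ = S.card := by
  rw [unCD_eq_card (fun i j => (simple_cast h₀ i j).trans (complex_cast h i j).symm)]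
  congr 1
  ext i
  simp only [mem_filter, mem_univ, true_and]
  rw [complex_last h i]
  have := simple_last h₀ i
  tauto

lemma unCD_complex_simple {Γ₀ Γ : Finpartition (univ : Finset (Fin (n + 1)))}
    {S : Finset (Fin n)} (h₀ : IsSimpleExt Γs Γ₀) (h : IsComplexExt Γs S Γ) :
    unCD Γ Γ₀ = S.card := by
  rw [unCD_eq_card (fun i j => (complex_cast h i j).trans (simple_cast h₀ i j).symm)]
  congr 1
  ext i
  simp only [mem_filter, mem_univ, true_and]
  rw [complex_last h i]
  have := simple_last h₀ i
  tauto

lemma unCD_complex_complex {Γ₁ Γ₂ : Finpartition (univ : Finset (Fin (n + 1)))}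
    {S₁ S₂ : Finset (Fin n)} (h₁ : IsComplexExt Γs S₁ Γ₁) (h₂ : IsComplexExt Γs S₂ Γ₂)
    (hne : S₁ ≠ S₂) : unCD Γ₁ Γ₂ = S₁.card + S₂.card := by
  have hdisj : Disjoint S₁ S₂ := Γs.disjoint h₁.1 h₂.1 hne
  rw [unCD_eq_card (fun i j => (complex_cast h₁ i j).trans (complex_cast h₂ i j).symm)]
  rw [← Finset.card_union_of_disjoint hdisj]
  congr 1
  ext i
  simp only [mem_filter, mem_univ, true_and, mem_union]
  rw [complex_last h₁ i, complex_last h₂ i]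
  have : ¬ (i ∈ S₁ ∧ i ∈ S₂) := fun ⟨a, b⟩ => (Finset.disjoint_left.1 hdisj a) b
  tauto


theorem stmt9 {n : ℕ} {Γs : Finpartition (univ : Finset (Fin n))}
    {Γ₀ : Finpartition (univ : Finset (Fin (n + 1)))} (h₀ : IsSimpleExt Γs Γ₀)
    (E : Finset (Fin n) → Finpartition (univ : Finset (Fin (n + 1))))
    (hE : ∀ S ∈ Γs.parts, IsComplexExt Γs S (E S))
    {S' : Finset (Fin n)} (hS' : S' ∈ Γs.parts) :
    (∑ S ∈ Γs.parts, unCD Γ₀ (E S)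
        ≤ unCD (E S') Γ₀ + ∑ S ∈ Γs.parts.erase S', unCD (E S') (E S)) ∧
      (1 < Γs.parts.card →
        ∑ S ∈ Γs.parts, unCD Γ₀ (E S)
          < unCD (E S') Γ₀ + ∑ S ∈ Γs.parts.erase S', unCD (E S') (E S)) := by
  have hL : ∑ S ∈ Γs.parts, unCD Γ₀ (E S) = ∑ S ∈ Γs.parts, S.card :=
    Finset.sum_congr rfl fun S hS => unCD_simple_complex h₀ (hE S hS)
  have hR : unCD (E S') Γ₀ + ∑ S ∈ Γs.parts.erase S', unCD (E S') (E S)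
      = ∑ S ∈ Γs.parts, S.card + (Γs.parts.erase S').card * S'.card := by
    have h1 : unCD (E S') Γ₀ = S'.card := unCD_complex_simple h₀ (hE S' hS')
    have h2 : ∑ S ∈ Γs.parts.erase S', unCD (E S') (E S)
        = ∑ S ∈ Γs.parts.erase S', (S'.card + S.card) := by
      refine Finset.sum_congr rfl fun S hS => ?_
      exact unCD_complex_complex (hE S' hS') (hE S (mem_of_mem_erase hS))
        (fun h => (mem_erase.1 hS).1 h.symm)
    rw [h1, h2, Finset.sum_add_distrib, Finset.sum_const, smul_eq_mul]
    rw [← Finset.add_sum_erase _ _ hS']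
    ring
  refine ⟨?_, ?_⟩
  · rw [hL, hR]; exact Nat.le_add_right _ _
  · intro hk
    rw [hL, hR]
    have h1 : 1 ≤ (Γs.parts.erase S').card := by
      rw [Finset.card_erase_of_mem hS']; omega
    have h2 : 1 ≤ S'.card := Finset.card_pos.2 (Γs.nonempty_of_mem_parts hS')
    have : 0 < (Γs.parts.erase S').card * S'.card := Nat.mul_pos h1 h2
    omega
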